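/- For every Farey triple q̄ = {p, q, r}, the three mutated triples μ_p(q̄), μ_q(q̄), μ_r(q̄) are pairwise distinct and each is distinct from q̄. Consequently, in the exchange graph whose vertices are the Farey triples and whose edges join a Farey triple to each of its mutations, every vertex has exactly three neighbours. -/

import Mathlib

/-- `ℚ∞ = ℚ ∪ {∞}`, ordered with `∞ = ⊤` as the greatest element. -/
abbrev QInf : Type := WithTop ℚ

/-- The numerator `d(q)` of the reduced representation `q = d(q)/r(q)`; `d(∞) = 1`. -/
def fnum : QInf → ℤ := WithTop.recTopCoe 1 (fun q => q.num)

/-- The denominator `r(q)` of the reduced representation `q = d(q)/r(q)`; `r(∞) = 0`. -/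
def fden : QInf → ℤ := WithTop.recTopCoe 0 (fun q => (q.den : ℤ))

/-- The element of `ℚ∞` represented by the fraction `a / b`: it is `∞` if `b = 0`,
and otherwise the rational number `a / b` (normalized so that the denominator is
positive and the fraction is in lowest terms). -/
def fmk (a b : ℤ) : QInf := if b = 0 then (⊤ : QInf) else (((a : ℚ) / (b : ℚ)) : ℚ)

/-- The Farey distance `Δ(p,q) = |d(p)r(q) - d(q)r(p)|`. -/
def fdist (p q : QInf) : ℤ := |fnum p * fden q - fnum q * fden p|

/-- `p` and `q` are Farey neighbours if `Δ(p,q) = 1`. -/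
def FareyNbr (p q : QInf) : Prop := fdist p q = 1

/-- The Farey sum `p ⊕ q = (d(p) + d(q)) / (r(p) + r(q))`. -/
def fsum (p q : QInf) : QInf := fmk (fnum p + fnum q) (fden p + fden q)

/-- The Farey difference `p ⊖ q = (d(p) - d(q)) / (r(p) - r(q))`. -/
def fdiff (p q : QInf) : QInf := fmk (fnum p - fnum q) (fden p - fden q)

/-- A Farey triple: a three-element subset of `ℚ∞` whose elements are pairwise
Farey neighbours. -/
def IsFareyTriple (s : Set QInf) : Prop := s.ncard = 3 ∧ s.Pairwise FareyNbr

/-- The element replacing `p` in the mutation of the Farey triple `{p, q, r}` in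
direction `p`: it is `q ⊖ r` if `p` lies strictly between `q` and `r`, and `q ⊕ r`
otherwise. -/
def fareyMutEl (p q r : QInf) : QInf :=
  if (q < p ∧ p < r) ∨ (r < p ∧ p < q) then fdiff q r else fsum q r

/-- The mutation of the Farey triple `{p, q, r}` in direction `p`. -/
def fareyMut (p q r : QInf) : Set QInf := {fareyMutEl p q r, q, r}

/-- The complexity `c(q) = |d(q)| + r(q) + |d(q) - r(q)|`. -/
def complexity (x : QInf) : ℤ := |fnum x| + fden x + |fnum x - fden x|

/-- `t` is obtained from `s` by a single mutation of Farey triples. -/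
def IsMutationOf (s t : Set QInf) : Prop :=
  ∃ a b c : QInf, a ≠ b ∧ a ≠ c ∧ b ≠ c ∧ s = {a, b, c} ∧ t = fareyMut a b c

@[simp] lemma fnum_top : fnum ⊤ = 1 := rfl
@[simp] lemma fden_top : fden ⊤ = 0 := rfl
@[simp] lemma fnum_coe (x : ℚ) : fnum (x : QInf) = x.num := rfl
@[simp] lemma fden_coe (x : ℚ) : fden (x : QInf) = (x.den : ℤ) := rfl

lemma fden_nonneg (x : QInf) : 0 ≤ fden x := by
  cases x using WithTop.recTopCoe <;> simp

lemma fden_eq_zero {x : QInf} (h : fden x = 0) : x = ⊤ := by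
  cases x using WithTop.recTopCoe with
  | top => rfl
  | coe q => simp at h

lemma fmk_num_den (x : QInf) : fmk (fnum x) (fden x) = x := by
  cases x using WithTop.recTopCoe with
  | top => simp [fmk]
  | coe q =>
    have : (q.den : ℤ) ≠ 0 := by exact_mod_cast q.den_nz
    simp [fmk, this, Rat.num_div_den]

lemma fmk_neg (a b : ℤ) : fmk (-a) (-b) = fmk a b := by
  unfold fmk
  rcases eq_or_ne b 0 with h | h
  · simp [h]
  · rw [if_neg (by simpa using h), if_neg h]
    push_cast
    rw [neg_div_neg_eq]

lemma fmk_spec {a b : ℤ} (h : IsCoprime a b) :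
    ∃ ε : ℤ, (ε = 1 ∨ ε = -1) ∧ fnum (fmk a b) = ε * a ∧ fden (fmk a b) = ε * b := by
  rcases lt_trichotomy b 0 with hb | hb | hb
  · refine ⟨-1, Or.inr rfl, ?_, ?_⟩ <;>
    · rw [← fmk_neg a b]
      have hb' : 0 < -b := by omega
      have hc : Nat.Coprime (-a).natAbs (-b).natAbs := by
        rw [Int.isCoprime_iff_gcd_eq_one] at h
        simpa [Int.gcd] using h
      simp only [fmk, if_neg hb'.ne']
      first
      | (show ((((-a:ℤ) : ℚ) / ((-b:ℤ):ℚ)).num) = -1 * a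
         rw [Rat.num_div_eq_of_coprime hb' hc]; ring)
      | (show ((((((-a:ℤ) : ℚ) / ((-b:ℤ):ℚ)).den : ℕ)) : ℤ) = -1 * b
         rw [Rat.den_div_eq_of_coprime hb' hc]; ring)
  · subst hb
    have : IsUnit a := isCoprime_zero_right.mp h
    rcases Int.isUnit_iff.mp this with ha | ha <;> subst ha
    · exact ⟨1, Or.inl rfl, by simp [fmk], by simp [fmk]⟩
    · exact ⟨-1, Or.inr rfl, by simp [fmk], by simp [fmk]⟩
  · refine ⟨1, Or.inl rfl, ?_, ?_⟩ <;>
    · have hc : Nat.Coprime a.natAbs b.natAbs := by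
        rw [Int.isCoprime_iff_gcd_eq_one] at h
        simpa [Int.gcd] using h
      simp only [fmk, if_neg hb.ne']
      first
      | (show (((a:ℚ) / (b:ℚ)).num) = 1 * a
         rw [Rat.num_div_eq_of_coprime hb hc]; ring)
      | (show (((((a:ℚ) / (b:ℚ)).den : ℕ)) : ℤ) = 1 * b
         rw [Rat.den_div_eq_of_coprime hb hc]; ring)

lemma fdist_self (x : QInf) : fdist x x = 0 := by simp [fdist]

lemma fdist_comm (x y : QInf) : fdist x y = fdist y x := by
  unfold fdist; rw [abs_sub_comm]

lemma fareyNbr_symm {x y : QInf} (h : FareyNbr x y) : FareyNbr y x := by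
  unfold FareyNbr at *; rwa [fdist_comm]

lemma ne_of_fareyNbr {x y : QInf} (h : FareyNbr x y) : x ≠ y := by
  rintro rfl; simp [FareyNbr, fdist_self] at h

lemma fdist_fmk_left {a b : ℤ} (h : IsCoprime a b) (x : QInf) :
    fdist (fmk a b) x = |a * fden x - fnum x * b| := by
  obtain ⟨ε, hε, hn, hd⟩ := fmk_spec h
  unfold fdist
  rw [hn, hd]
  rcases hε with rfl | rfl
  · norm_num
  · rw [show (-1:ℤ) * a * fden x - fnum x * ((-1) * b) = -(a * fden x - fnum x * b) from by ring, abs_neg]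

-- coprimality of sum and diff pairs
lemma coprime_sum {q r : QInf} (h : FareyNbr q r) :
    IsCoprime (fnum q + fnum r) (fden q + fden r) := by
  have := h
  unfold FareyNbr fdist at this
  rcases abs_eq (by norm_num : (0:ℤ) ≤ 1) |>.mp this with he | he
  · exact ⟨fden r, -(fnum r), by linear_combination he⟩
  · exact ⟨-(fden r), fnum r, by linear_combination -he⟩

lemma coprime_diff {q r : QInf} (h : FareyNbr q r) :
    IsCoprime (fnum q - fnum r) (fden q - fden r) := by
  have := h
  unfold FareyNbr fdist at this
  rcases abs_eq (by norm_num : (0:ℤ) ≤ 1) |>.mp this with he | he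
  · exact ⟨fden r, -(fnum r), by linear_combination he⟩
  · exact ⟨-(fden r), fnum r, by linear_combination -he⟩

lemma abs_one_cases {e : ℤ} (h : |e| = 1) : e = 1 ∨ e = -1 :=
  (abs_eq (by norm_num : (0:ℤ) ≤ 1)).mp h

lemma fareyNbr_fsum_left {q r : QInf} (h : FareyNbr q r) : FareyNbr (fsum q r) q := by
  unfold FareyNbr at *
  unfold fsum
  rw [fdist_fmk_left (coprime_sum h)]
  unfold fdist at h
  rcases abs_one_cases h with he | he <;>
  · rw [show (fnum q + fnum r) * fden q - fnum q * (fden q + fden r)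
        = -(fnum q * fden r - fnum r * fden q) from by ring, abs_neg]
    omega

lemma fareyNbr_fsum_right {q r : QInf} (h : FareyNbr q r) : FareyNbr (fsum q r) r := by
  unfold FareyNbr at *
  unfold fsum
  rw [fdist_fmk_left (coprime_sum h)]
  unfold fdist at h
  rw [show (fnum q + fnum r) * fden r - fnum r * (fden q + fden r)
      = (fnum q * fden r - fnum r * fden q) from by ring]
  exact h

lemma fareyNbr_fdiff_left {q r : QInf} (h : FareyNbr q r) : FareyNbr (fdiff q r) q := by
  unfold FareyNbr at *
  unfold fdiff
  rw [fdist_fmk_left (coprime_diff h)]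
  unfold fdist at h
  rw [show (fnum q - fnum r) * fden q - fnum q * (fden q - fden r)
      = (fnum q * fden r - fnum r * fden q) from by ring]
  exact h

lemma fareyNbr_fdiff_right {q r : QInf} (h : FareyNbr q r) : FareyNbr (fdiff q r) r := by
  unfold FareyNbr at *
  unfold fdiff
  rw [fdist_fmk_left (coprime_diff h)]
  unfold fdist at h
  rw [show (fnum q - fnum r) * fden r - fnum r * (fden q - fden r)
      = (fnum q * fden r - fnum r * fden q) from by ring]
  exact h

lemma fsum_ne_fdiff {q r : QInf} (h : FareyNbr q r) : fsum q r ≠ fdiff q r := by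
  intro hcon
  have h2 : fdist (fsum q r) (fdiff q r) = 0 := by rw [hcon, fdist_self]
  unfold fsum at h2
  rw [fdist_fmk_left (coprime_sum h)] at h2
  obtain ⟨ε, hε, hn, hd⟩ := fmk_spec (coprime_diff h)
  unfold fdiff at h2
  rw [hn, hd] at h2
  unfold FareyNbr fdist at h
  have key : (fnum q + fnum r) * (ε * (fden q - fden r)) - ε * (fnum q - fnum r) * (fden q + fden r)
      = ε * 2 * (fnum r * fden q - fnum q * fden r) := by ring
  rw [key] at h2
  rcases abs_one_cases h with he | he <;> rcases hε with rfl | rfl <;>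
    rw [abs_eq_zero] at h2 <;> omega

lemma triple_rep {p q r : QInf} (h1 : FareyNbr p q) (h2 : FareyNbr p r) (h3 : FareyNbr q r) :
    p = fsum q r ∨ p = fdiff q r := by
  unfold FareyNbr fdist at h1 h2 h3
  have key1 : fnum q * (fnum p * fden r - fnum r * fden p)
      - fnum r * (fnum p * fden q - fnum q * fden p)
      = fnum p * (fnum q * fden r - fnum r * fden q) := by ring
  have key2 : fden q * (fnum p * fden r - fnum r * fden p)
      - fden r * (fnum p * fden q - fnum q * fden p)
      = fden p * (fnum q * fden r - fnum r * fden q) := by ring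
  have hp := (fmk_num_den p).symm
  rcases abs_one_cases h1 with e1 | e1 <;> rcases abs_one_cases h2 with e2 | e2 <;>
    rcases abs_one_cases h3 with e3 | e3 <;>
    rw [e1, e2, e3] at key1 key2 <;>
    [skip; skip; skip; skip; skip; skip; skip; skip] <;>
    first
    | (left
       rw [hp, show fnum p = fnum q + fnum r from by linarith,
         show fden p = fden q + fden r from by linarith]
       rfl)
    | (left
       rw [hp, show fnum p = -(fnum q + fnum r) from by linarith,
         show fden p = -(fden q + fden r) from by linarith, fmk_neg]
       rfl)
    | (right
       rw [hp, show fnum p = fnum q - fnum r from by linarith,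
         show fden p = fden q - fden r from by linarith]
       rfl)
    | (right
       rw [hp, show fnum p = -(fnum q - fnum r) from by linarith,
         show fden p = -(fden q - fden r) from by linarith, fmk_neg]
       rfl)

lemma qinf_lt_iff (x y : QInf) : x < y ↔ fnum x * fden y < fnum y * fden x := by
  cases x using WithTop.recTopCoe with
  | top =>
    cases y using WithTop.recTopCoe with
    | top => simp
    | coe b =>
      simp only [fnum_top, fden_top, fnum_coe, fden_coe, one_mul, mul_zero]
      constructor
      · intro h; exact absurd h (WithTop.not_top_lt _)
      · intro h; omega
  | coe a =>
    cases y using WithTop.recTopCoe with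
    | top =>
      simp only [fnum_top, fden_top, fnum_coe, fden_coe, one_mul, mul_zero]
      constructor
      · intro _; exact_mod_cast a.pos
      · intro _; exact WithTop.coe_lt_top a
    | coe b =>
      rw [WithTop.coe_lt_coe, Rat.lt_iff]
      simp

lemma fmk_spec_pos {a b : ℤ} (h : IsCoprime a b) (hb : 0 < b) :
    fnum (fmk a b) = a ∧ fden (fmk a b) = b := by
  obtain ⟨ε, hε, hn, hd⟩ := fmk_spec h
  have h0 : 0 ≤ fden (fmk a b) := fden_nonneg _
  rcases hε with rfl | rfl
  · simp only [one_mul] at hn hd; exact ⟨hn, hd⟩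
  · rw [hd] at h0; nlinarith [h0, hb]

lemma fsum_between {q r : QInf} (h3 : FareyNbr q r) :
    (q < fsum q r ∧ fsum q r < r) ∨ (r < fsum q r ∧ fsum q r < q) := by
  have he := h3
  unfold FareyNbr fdist at he
  have hq0 := fden_nonneg q
  have hr0 := fden_nonneg r
  have hpos : 0 < fden q + fden r := by
    rcases lt_or_ge 0 (fden q + fden r) with h | h
    · exact h
    · exfalso
      have h1 : fden q = 0 := by omega
      have h2 : fden r = 0 := by omega
      rw [h1, h2] at he; simp at he
  obtain ⟨hn, hd⟩ := fmk_spec_pos (coprime_sum h3) hpos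
  have hnn : fnum (fsum q r) = fnum q + fnum r := hn
  have hdd : fden (fsum q r) = fden q + fden r := hd
  rcases abs_one_cases he with e | e
  · right
    constructor
    · rw [qinf_lt_iff, hnn, hdd]; nlinarith [e, hq0, hr0]
    · rw [qinf_lt_iff, hnn, hdd]; nlinarith [e, hq0, hr0]
  · left
    constructor
    · rw [qinf_lt_iff, hnn, hdd]; nlinarith [e, hq0, hr0]
    · rw [qinf_lt_iff, hnn, hdd]; nlinarith [e, hq0, hr0]

lemma fdiff_not_between {q r : QInf} (h3 : FareyNbr q r) :
    ¬((q < fdiff q r ∧ fdiff q r < r) ∨ (r < fdiff q r ∧ fdiff q r < q)) := by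
  have he := h3
  unfold FareyNbr fdist at he
  have hq0 := fden_nonneg q
  have hr0 := fden_nonneg r
  rcases lt_trichotomy (fden q - fden r) 0 with hd | hd | hd
  · have : fdiff q r = fmk (-(fnum q - fnum r)) (-(fden q - fden r)) := (fmk_neg _ _).symm
    obtain ⟨hn1, hd1⟩ := fmk_spec_pos ((coprime_diff h3).neg_neg) (by omega : (0:ℤ) < -(fden q - fden r))
    rw [fmk_neg] at hn1 hd1
    have hnn : fnum (fdiff q r) = -(fnum q - fnum r) := hn1
    have hdd : fden (fdiff q r) = -(fden q - fden r) := hd1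
    rw [qinf_lt_iff q _, qinf_lt_iff _ r, qinf_lt_iff r _, qinf_lt_iff _ q, hnn, hdd]
    rcases abs_one_cases he with e | e <;>
      (rintro (⟨c1, c2⟩ | ⟨c1, c2⟩) <;> nlinarith [e, c1, c2, hq0, hr0])
  · have : fdiff q r = ⊤ := by
      unfold fdiff; rw [show fden q - fden r = 0 from hd]; simp [fmk]
    rw [this]
    rintro (⟨_, c2⟩ | ⟨_, c2⟩) <;> exact WithTop.not_top_lt _ c2
  · obtain ⟨hnn, hdd⟩ := fmk_spec_pos (coprime_diff h3) hd
    have hnn : fnum (fdiff q r) = fnum q - fnum r := hnn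
    have hdd : fden (fdiff q r) = fden q - fden r := hdd
    rw [qinf_lt_iff q _, qinf_lt_iff _ r, qinf_lt_iff r _, qinf_lt_iff _ q, hnn, hdd]
    rcases abs_one_cases he with e | e <;>
      (rintro (⟨c1, c2⟩ | ⟨c1, c2⟩) <;> nlinarith [e, c1, c2, hq0, hr0])

lemma fareyMutEl_spec {p q r : QInf} (h1 : FareyNbr p q) (h2 : FareyNbr p r)
    (h3 : FareyNbr q r) :
    (p = fsum q r ∧ fareyMutEl p q r = fdiff q r) ∨
    (p = fdiff q r ∧ fareyMutEl p q r = fsum q r) := by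
  rcases triple_rep h1 h2 h3 with hp | hp
  · have hc : (q < p ∧ p < r) ∨ (r < p ∧ p < q) := by rw [hp]; exact fsum_between h3
    exact Or.inl ⟨hp, by unfold fareyMutEl; rw [if_pos hc]⟩
  · have hc : ¬((q < p ∧ p < r) ∨ (r < p ∧ p < q)) := by
      rw [hp]; exact fdiff_not_between h3
    exact Or.inr ⟨hp, by unfold fareyMutEl; rw [if_neg hc]⟩

lemma fareyMutEl_ne {p q r : QInf} (h1 : FareyNbr p q) (h2 : FareyNbr p r)
    (h3 : FareyNbr q r) : fareyMutEl p q r ≠ p := by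
  rcases fareyMutEl_spec h1 h2 h3 with ⟨hp, hm⟩ | ⟨hp, hm⟩
  · rw [hm, hp]; exact fun h => fsum_ne_fdiff h3 h.symm
  · rw [hm, hp]; exact fsum_ne_fdiff h3

lemma fareyMutEl_nbr_left {p q r : QInf} (h1 : FareyNbr p q) (h2 : FareyNbr p r)
    (h3 : FareyNbr q r) : FareyNbr (fareyMutEl p q r) q := by
  rcases fareyMutEl_spec h1 h2 h3 with ⟨_, hm⟩ | ⟨_, hm⟩
  · rw [hm]; exact fareyNbr_fdiff_left h3
  · rw [hm]; exact fareyNbr_fsum_left h3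

lemma fareyMutEl_nbr_right {p q r : QInf} (h1 : FareyNbr p q) (h2 : FareyNbr p r)
    (h3 : FareyNbr q r) : FareyNbr (fareyMutEl p q r) r := by
  rcases fareyMutEl_spec h1 h2 h3 with ⟨_, hm⟩ | ⟨_, hm⟩
  · rw [hm]; exact fareyNbr_fdiff_right h3
  · rw [hm]; exact fareyNbr_fsum_right h3

lemma fareyMutEl_invol {p q r : QInf} (h1 : FareyNbr p q) (h2 : FareyNbr p r)
    (h3 : FareyNbr q r) : fareyMutEl (fareyMutEl p q r) q r = p := by
  have n1 := fareyMutEl_nbr_left h1 h2 h3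
  have n2 := fareyMutEl_nbr_right h1 h2 h3
  rcases fareyMutEl_spec h1 h2 h3 with ⟨hp, hm⟩ | ⟨hp, hm⟩ <;>
    rcases fareyMutEl_spec n1 n2 h3 with ⟨hp', hm'⟩ | ⟨hp', hm'⟩
  · rw [hm] at hp'; exact absurd hp'.symm (fsum_ne_fdiff h3)
  · rw [hm', ← hp]
  · rw [hm', ← hp]
  · rw [hm] at hp'; exact absurd hp' (fsum_ne_fdiff h3)

lemma fsum_comm (q r : QInf) : fsum q r = fsum r q := by
  unfold fsum; rw [add_comm (fnum q), add_comm (fden q)]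

lemma fdiff_comm (q r : QInf) : fdiff q r = fdiff r q := by
  unfold fdiff
  rw [show fnum q - fnum r = -(fnum r - fnum q) from by ring,
    show fden q - fden r = -(fden r - fden q) from by ring, fmk_neg]

lemma fareyMutEl_comm (p q r : QInf) : fareyMutEl p q r = fareyMutEl p r q := by
  unfold fareyMutEl
  by_cases h : (q < p ∧ p < r) ∨ (r < p ∧ p < q)
  · rw [if_pos h, if_pos h.symm, fdiff_comm]
  · rw [if_neg h, if_neg (fun hc => h hc.symm), fsum_comm]

lemma fareyMut_comm (p q r : QInf) : fareyMut p q r = fareyMut p r q := by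
  unfold fareyMut
  rw [fareyMutEl_comm, Set.pair_comm q r]

set_option maxHeartbeats 2000000 in
lemma triple_eq_perm {a b c p q r : QInf} (hab : a ≠ b) (hac : a ≠ c) (hbc : b ≠ c)
    (h : ({a, b, c} : Set QInf) = {p, q, r}) :
    (a = p ∧ b = q ∧ c = r) ∨ (a = p ∧ b = r ∧ c = q) ∨
    (a = q ∧ b = p ∧ c = r) ∨ (a = q ∧ b = r ∧ c = p) ∨
    (a = r ∧ b = p ∧ c = q) ∨ (a = r ∧ b = q ∧ c = p) := by
  have ha : a = p ∨ a = q ∨ a = r := by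
    have : a ∈ ({p, q, r} : Set QInf) := h ▸ (by simp)
    simpa using this
  have hb : b = p ∨ b = q ∨ b = r := by
    have : b ∈ ({p, q, r} : Set QInf) := h ▸ (by simp)
    simpa using this
  have hc : c = p ∨ c = q ∨ c = r := by
    have : c ∈ ({p, q, r} : Set QInf) := h ▸ (by simp)
    simpa using this
  rcases ha with rfl | rfl | rfl <;> rcases hb with rfl | rfl | rfl <;>
    rcases hc with rfl | rfl | rfl <;> tauto

lemma isFareyTriple_mk {a b c : QInf} (hab : a ≠ b) (hac : a ≠ c) (hbc : b ≠ c)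
    (n1 : FareyNbr a b) (n2 : FareyNbr a c) (n3 : FareyNbr b c) :
    IsFareyTriple {a, b, c} := by
  constructor
  · rw [Set.ncard_eq_three]; exact ⟨a, b, c, hab, hac, hbc, rfl⟩
  · intro x hx y hy hxy
    simp only [Set.mem_insert_iff, Set.mem_singleton_iff] at hx hy
    rcases hx with rfl | rfl | rfl <;> rcases hy with rfl | rfl | rfl <;>
      first
      | exact absurd rfl hxy
      | exact n1 | exact n2 | exact n3
      | exact fareyNbr_symm n1 | exact fareyNbr_symm n2 | exact fareyNbr_symm n3

lemma nbrs_of_triple {a b c : QInf} (ht : IsFareyTriple {a, b, c})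
    (hab : a ≠ b) (hac : a ≠ c) (hbc : b ≠ c) :
    FareyNbr a b ∧ FareyNbr a c ∧ FareyNbr b c :=
  ⟨ht.2 (by simp) (by simp) hab, ht.2 (by simp) (by simp) hac, ht.2 (by simp) (by simp) hbc⟩

lemma ne_of_mem_not_mem {s t : Set QInf} {x : QInf} (hx : x ∈ t) (hnx : x ∉ s) : s ≠ t :=
  fun h => hnx (h ▸ hx)

lemma not_mem_triple {x a b c : QInf} (h1 : x ≠ a) (h2 : x ≠ b) (h3 : x ≠ c) :
    x ∉ ({a, b, c} : Set QInf) := by simp [h1, h2, h3]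


/-- For every Farey triple `{p, q, r}`, the three mutated triples are pairwise
distinct and each is distinct from `{p, q, r}`; consequently, in the exchange graph
of Farey triples (with an edge between a Farey triple and each of its mutations)
every vertex has exactly three neighbours. -/
theorem fareyTriple_three_neighbours (p q r : QInf)
    (hpq : p ≠ q) (hpr : p ≠ r) (hqr : q ≠ r)
    (h1 : FareyNbr p q) (h2 : FareyNbr p r) (h3 : FareyNbr q r) :
    fareyMut p q r ≠ fareyMut q p r ∧
    fareyMut p q r ≠ fareyMut r p q ∧
    fareyMut q p r ≠ fareyMut r p q ∧
    fareyMut p q r ≠ ({p, q, r} : Set QInf) ∧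
    fareyMut q p r ≠ ({p, q, r} : Set QInf) ∧
    fareyMut r p q ≠ ({p, q, r} : Set QInf) ∧
    {t : Set QInf | IsFareyTriple t ∧ t ≠ {p, q, r} ∧
        (IsMutationOf ({p, q, r} : Set QInf) t ∨
          IsMutationOf t ({p, q, r} : Set QInf))}.ncard = 3 := by
  have h1' := fareyNbr_symm h1
  have h2' := fareyNbr_symm h2
  have h3' := fareyNbr_symm h3
  -- facts about the three mutated elements
  have hp1 : fareyMutEl p q r ≠ p := fareyMutEl_ne h1 h2 h3
  have hp1q : FareyNbr (fareyMutEl p q r) q := fareyMutEl_nbr_left h1 h2 h3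
  have hp1r : FareyNbr (fareyMutEl p q r) r := fareyMutEl_nbr_right h1 h2 h3
  have hq1 : fareyMutEl q p r ≠ q := fareyMutEl_ne h1' h3 h2
  have hq1p : FareyNbr (fareyMutEl q p r) p := fareyMutEl_nbr_left h1' h3 h2
  have hq1r : FareyNbr (fareyMutEl q p r) r := fareyMutEl_nbr_right h1' h3 h2
  have hr1 : fareyMutEl r p q ≠ r := fareyMutEl_ne h2' h3' h1
  have hr1p : FareyNbr (fareyMutEl r p q) p := fareyMutEl_nbr_left h2' h3' h1
  have hr1q : FareyNbr (fareyMutEl r p q) q := fareyMutEl_nbr_right h2' h3' h1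
  have hpT1 : p ∉ fareyMut p q r :=
    not_mem_triple (Ne.symm hp1) hpq hpr
  have hqT2 : q ∉ fareyMut q p r :=
    not_mem_triple (Ne.symm hq1) hpq.symm hqr
  have hrT3 : r ∉ fareyMut r p q :=
    not_mem_triple (Ne.symm hr1) hpr.symm hqr.symm
  have hpT2 : p ∈ fareyMut q p r := by simp [fareyMut]
  have hpT3 : p ∈ fareyMut r p q := by simp [fareyMut]
  have hqT3 : q ∈ fareyMut r p q := by simp [fareyMut]
  have hqT1 : q ∈ fareyMut p q r := by simp [fareyMut]
  have c1 : fareyMut p q r ≠ fareyMut q p r := ne_of_mem_not_mem hpT2 hpT1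
  have c2 : fareyMut p q r ≠ fareyMut r p q := ne_of_mem_not_mem hpT3 hpT1
  have c3 : fareyMut q p r ≠ fareyMut r p q := ne_of_mem_not_mem hqT3 hqT2
  have c4 : fareyMut p q r ≠ ({p, q, r} : Set QInf) :=
    ne_of_mem_not_mem (by simp) hpT1
  have c5 : fareyMut q p r ≠ ({p, q, r} : Set QInf) :=
    ne_of_mem_not_mem (by simp) hqT2
  have c6 : fareyMut r p q ≠ ({p, q, r} : Set QInf) :=
    ne_of_mem_not_mem (by simp) hrT3
  refine ⟨c1, c2, c3, c4, c5, c6, ?_⟩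
  have hset : {t : Set QInf | IsFareyTriple t ∧ t ≠ {p, q, r} ∧
        (IsMutationOf ({p, q, r} : Set QInf) t ∨
          IsMutationOf t ({p, q, r} : Set QInf))} =
      {fareyMut p q r, fareyMut q p r, fareyMut r p q} := by
    ext t
    simp only [Set.mem_setOf_eq, Set.mem_insert_iff, Set.mem_singleton_iff]
    constructor
    · rintro ⟨htri, hne, hmut | hmut⟩
      · obtain ⟨a, b, c, hab, hac, hbc, hs, ht⟩ := hmut
        rcases triple_eq_perm hab hac hbc hs.symm with
          ⟨rfl, rfl, rfl⟩ | ⟨rfl, rfl, rfl⟩ | ⟨rfl, rfl, rfl⟩ |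
          ⟨rfl, rfl, rfl⟩ | ⟨rfl, rfl, rfl⟩ | ⟨rfl, rfl, rfl⟩
        · exact Or.inl ht
        · rw [fareyMut_comm] at ht; exact Or.inl ht
        · exact Or.inr (Or.inl ht)
        · rw [fareyMut_comm] at ht; exact Or.inr (Or.inl ht)
        · exact Or.inr (Or.inr ht)
        · rw [fareyMut_comm] at ht; exact Or.inr (Or.inr ht)
      · obtain ⟨a, b, c, hab, hac, hbc, ht, hs⟩ := hmut
        have htri' : IsFareyTriple {a, b, c} := ht ▸ htri
        obtain ⟨n1, n2, n3⟩ := nbrs_of_triple htri' hab hac hbc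
        have hinv : fareyMutEl (fareyMutEl a b c) b c = a := fareyMutEl_invol n1 n2 n3
        have ha'b : fareyMutEl a b c ≠ b := ne_of_fareyNbr (fareyMutEl_nbr_left n1 n2 n3)
        have ha'c : fareyMutEl a b c ≠ c := ne_of_fareyNbr (fareyMutEl_nbr_right n1 n2 n3)
        have hs' : ({fareyMutEl a b c, b, c} : Set QInf) = {p, q, r} := hs.symm
        have hkey : fareyMut (fareyMutEl a b c) b c = {a, b, c} := by
          show ({fareyMutEl (fareyMutEl a b c) b c, b, c} : Set QInf) = {a, b, c}
          rw [hinv]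
        rcases triple_eq_perm ha'b ha'c hbc hs' with
          ⟨he, rfl, rfl⟩ | ⟨he, rfl, rfl⟩ | ⟨he, rfl, rfl⟩ |
          ⟨he, rfl, rfl⟩ | ⟨he, rfl, rfl⟩ | ⟨he, rfl, rfl⟩
        · exact Or.inl (by rw [ht, ← hkey, he])
        · exact Or.inl (by rw [ht, ← hkey, he, fareyMut_comm])
        · exact Or.inr (Or.inl (by rw [ht, ← hkey, he]))
        · exact Or.inr (Or.inl (by rw [ht, ← hkey, he, fareyMut_comm]))
        · exact Or.inr (Or.inr (by rw [ht, ← hkey, he]))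
        · exact Or.inr (Or.inr (by rw [ht, ← hkey, he, fareyMut_comm]))
    · rintro (rfl | rfl | rfl)
      · refine ⟨?_, c4, Or.inl ⟨p, q, r, hpq, hpr, hqr, rfl, rfl⟩⟩
        exact isFareyTriple_mk (ne_of_fareyNbr hp1q) (ne_of_fareyNbr hp1r) hqr hp1q hp1r h3
      · refine ⟨?_, c5, Or.inl ⟨q, p, r, hpq.symm, hqr, hpr, ?_, rfl⟩⟩
        · exact isFareyTriple_mk (ne_of_fareyNbr hq1p) (ne_of_fareyNbr hq1r) hpr hq1p hq1r h2
        · exact Set.insert_comm p q {r}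
      · refine ⟨?_, c6, Or.inl ⟨r, p, q, hpr.symm, hqr.symm, hpq, ?_, rfl⟩⟩
        · exact isFareyTriple_mk (ne_of_fareyNbr hr1p) (ne_of_fareyNbr hr1q) hpq hr1p hr1q h1
        · ext x; simp; tauto
  rw [hset, Set.ncard_eq_three]
  exact ⟨_, _, _, c1, c2, c3, rfl⟩
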